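/- Every nonempty Motzkin path without peaks or valleys can be written uniquely in exactly one of the forms HA, UA'D, or UA'DHA, where A is an arbitrary (possibly empty) Motzkin path without peaks or valleys and A' is a nonempty Motzkin path without peaks or valleys. -/
import Mathlib


/-- Steps of bargraphs / Motzkin paths. -/
inductive Step where
  | U : Step
  | H : Step
  | D : Step
deriving DecidableEq

/-- Vertical displacement of a step. -/
def Step.val : Step → ℤ
  | .U => 1
  | .H => 0
  | .D => -1

/-- Mirror of a step (swap U and D). -/
def Step.mirror : Step → Step
  | .U => .D
  | .H => .H
  | .D => .U

/-- Final height of a word. -/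
def hgt (w : List Step) : ℤ := (w.map Step.val).sum

/-- A Motzkin path prefix: never goes below the x-axis. -/
def IsMotzkinPrefix (w : List Step) : Prop := ∀ p : List Step, p <+: w → 0 ≤ hgt p

/-- A Motzkin path: never below the x-axis, ends at height 0. -/
def IsMotzkin (w : List Step) : Prop := IsMotzkinPrefix w ∧ hgt w = 0

/-- No peak `UD` and no valley `DU`. -/
def Cornerless (w : List Step) : Prop :=
  ¬ [Step.U, Step.D] <:+: w ∧ ¬ [Step.D, Step.U] <:+: w

/-- A bargraph: starts at the origin, ends on the x-axis, stays strictly above the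
x-axis except at the endpoints, and has no factor `UD` or `DU`. -/
def IsBargraph (w : List Step) : Prop :=
  2 ≤ w.length ∧ hgt w = 0 ∧
    (∀ p : List Step, p <+: w → p ≠ [] → p ≠ w → 0 < hgt p) ∧ Cornerless w

/-- Semiperimeter: number of `U` steps plus number of `H` steps. -/
def semi (w : List Step) : ℕ := w.count Step.U + w.count Step.H

/-- Length of the initial run of `U` steps. -/
def leadU : List Step → ℕ
  | Step.U :: rest => leadU rest + 1
  | _ => 0

/-- Length of the initial run of `H` steps. -/
def leadH : List Step → ℕ
  | Step.H :: rest => leadH rest + 1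
  | _ => 0

/-- Length of the initial run of `D` steps. -/
def leadD : List Step → ℕ
  | Step.D :: rest => leadD rest + 1
  | _ => 0

/-- Length of the first maximal run of `D` steps (0 if none). -/
def firstDescLen : List Step → ℕ
  | [] => 0
  | Step.D :: rest => leadD rest + 1
  | _ :: rest => firstDescLen rest

/-- Number of occurrences of the two-letter factor `a b`. -/
def cnt2 (a b : Step) : List Step → ℕ
  | x :: y :: rest => (if x = a ∧ y = b then 1 else 0) + cnt2 a b (y :: rest)
  | _ => 0

/-- Heights of the columns (`H` steps), starting from a given height. -/
def colHeights : ℤ → List Step → List ℤ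
  | _, [] => []
  | h, Step.U :: rest => colHeights (h + 1) rest
  | h, Step.H :: rest => h :: colHeights h rest
  | h, Step.D :: rest => colHeights (h - 1) rest

/-- Width of the leftmost maximal horizontal segment (0 if none). -/
def lhsW : List Step → ℕ
  | [] => 0
  | Step.H :: rest => leadH rest + 1
  | _ :: rest => lhsW rest

/-- Delete `h` steps at the start of the leftmost horizontal segment. -/
def stripLeadH (h : ℕ) : List Step → List Step
  | [] => []
  | Step.H :: rest => List.drop h (Step.H :: rest)
  | s :: rest => s :: stripLeadH h rest

/-- Number of initial columns of height 1: largest `j` such that the word begins `U H^j`. -/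
def iuc : List Step → ℕ
  | Step.U :: rest => leadH rest
  | _ => 0

/-- Number of maximal horizontal segments. -/
def hsCount : List Step → ℕ
  | [] => 0
  | [Step.H] => 1
  | [_] => 0
  | a :: b :: rest => (if a = Step.H ∧ b ≠ Step.H then 1 else 0) + hsCount (b :: rest)

/-- Mirror image: reverse the word and swap `U` with `D`. -/
def mir (w : List Step) : List Step := (w.reverse).map Step.mirror

/-- Shape of strictly alternating bargraphs:
`U^{i₁} H D^{k₁} H U^{i₂} H D^{k₂} H ⋯ U^{iₘ} H D^{kₘ}` with all `iᵣ, kᵣ ≥ 1`. -/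
inductive SAShape : List Step → Prop where
  | base (i k : ℕ) : 1 ≤ i → 1 ≤ k →
      SAShape (List.replicate i Step.U ++ [Step.H] ++ List.replicate k Step.D)
  | cons (i k : ℕ) (w : List Step) : 1 ≤ i → 1 ≤ k → SAShape w →
      SAShape (List.replicate i Step.U ++ [Step.H] ++ List.replicate k Step.D ++ [Step.H] ++ w)

/-- A strictly alternating bargraph. -/
def IsStrictAlt (w : List Step) : Prop := IsBargraph w ∧ SAShape w

/-- A secondary structure on `{0, …, m-1}`: all consecutive edges are present, every
vertex has at most one non-consecutive neighbour, and there are no crossing edges. -/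
def IsSecondaryStructure {m : ℕ} (G : SimpleGraph (Fin m)) : Prop :=
  (∀ i j : Fin m, (i : ℕ) + 1 = (j : ℕ) → G.Adj i j) ∧
  (∀ i j k : Fin m, G.Adj i j → G.Adj i k →
      (i : ℕ) + 1 ≠ (j : ℕ) → (j : ℕ) + 1 ≠ (i : ℕ) →
      (i : ℕ) + 1 ≠ (k : ℕ) → (k : ℕ) + 1 ≠ (i : ℕ) → j = k) ∧
  ¬ ∃ i j k l : Fin m, (i : ℕ) < (j : ℕ) ∧ (j : ℕ) < (k : ℕ) ∧ (k : ℕ) < (l : ℕ) ∧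
      G.Adj i k ∧ G.Adj j l

/-- Generating function of bargraphs: `x` (variable 0) marks `H` steps,
`y` (variable 1) marks `U` steps. -/
noncomputable def BG : MvPowerSeries (Fin 2) ℚ :=
  fun d => (Nat.card {w : List Step //
    IsBargraph w ∧ w.count Step.H = d 0 ∧ w.count Step.U = d 1} : ℚ)

/-- Generating function of cornerless Motzkin paths. -/
noncomputable def MG : MvPowerSeries (Fin 2) ℚ :=
  fun d => (Nat.card {w : List Step //
    IsMotzkin w ∧ Cornerless w ∧ w.count Step.H = d 0 ∧ w.count Step.U = d 1} : ℚ)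

/-- Generating function of bargraphs avoiding the factor `DH`. -/
noncomputable def BDH : MvPowerSeries (Fin 2) ℚ :=
  fun d => (Nat.card {w : List Step //
    IsBargraph w ∧ ¬ [Step.D, Step.H] <:+: w ∧
      w.count Step.H = d 0 ∧ w.count Step.U = d 1} : ℚ)

/-- Generating function of bargraphs avoiding the factors `DH` and `HH`. -/
noncomputable def BDHHH : MvPowerSeries (Fin 2) ℚ :=
  fun d => (Nat.card {w : List Step //
    IsBargraph w ∧ ¬ [Step.D, Step.H] <:+: w ∧ ¬ [Step.H, Step.H] <:+: w ∧
      w.count Step.H = d 0 ∧ w.count Step.U = d 1} : ℚ)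

/-- Generating function of cornerless Motzkin path prefixes ending at height `h`. -/
noncomputable def Pgf (h : ℕ) : MvPowerSeries (Fin 2) ℚ :=
  fun d => (Nat.card {w : List Step //
    IsMotzkinPrefix w ∧ Cornerless w ∧ hgt w = (h : ℤ) ∧
      w.count Step.H = d 0 ∧ w.count Step.U = d 1} : ℚ)

/-- Decomposition `G = U^a G₁ H G₂ D^a` of a strictly alternating bargraph. -/
def SADecomp (t : ℕ × List Step × List Step) (G : List Step) : Prop :=
  1 ≤ t.1 ∧ IsStrictAlt t.2.1 ∧ IsStrictAlt (Step.U :: (t.2.2 ++ [Step.D])) ∧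
    G = List.replicate t.1 Step.U ++ t.2.1 ++ [Step.H] ++ t.2.2 ++
      List.replicate t.1 Step.D

lemma hgt_nil : hgt ([] : List Step) = 0 := rfl

lemma hgt_cons (x : Step) (t : List Step) : hgt (x :: t) = x.val + hgt t := by
  simp [hgt]

lemma hgt_append (a b : List Step) : hgt (a ++ b) = hgt a + hgt b := by
  simp [hgt]

lemma cornerless_of_infix {v w : List Step} (h : Cornerless w) (hv : v <:+: w) :
    Cornerless v :=
  ⟨fun h1 => h.1 (h1.trans hv), fun h2 => h.2 (h2.trans hv)⟩

lemma hgt_take_succ {t : List Step} {m : ℕ} (h : m < t.length) :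
    hgt (t.take (m + 1)) = hgt (t.take m) + (t[m]).val := by
  rw [List.take_succ, List.getElem?_eq_getElem h]
  show hgt (t.take m ++ [t[m]]) = _
  rw [hgt_append, hgt_cons, hgt_nil]
  ring

lemma split_unique {A1 A2 r1 r2 : List Step}
    (h1 : IsMotzkin A1) (h2 : IsMotzkin A2)
    (he : A1 ++ [Step.D] ++ r1 = A2 ++ [Step.D] ++ r2) :
    A1 = A2 ∧ r1 = r2 := by
  have key : ∀ (X Y rx ry : List Step), IsMotzkin X → IsMotzkin Y →
      X ++ [Step.D] ++ rx = Y ++ [Step.D] ++ ry → X.length < Y.length → False := by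
    intro X Y rx ry hX hY he hlt
    have hp1 : X ++ [Step.D] <+: Y ++ [Step.D] ++ ry := by
      rw [← he]
      simpa [List.append_assoc] using (X ++ [Step.D]).prefix_append rx
    have hp2 : Y <+: Y ++ [Step.D] ++ ry := by
      simpa [List.append_assoc] using Y.prefix_append ([Step.D] ++ ry)
    have hpre : X ++ [Step.D] <+: Y :=
      List.prefix_of_prefix_length_le hp1 hp2 (by simpa using hlt)
    have h0 := hY.1 _ hpre
    rw [hgt_append, hX.2] at h0
    simp [hgt, Step.val] at h0
  rcases Nat.lt_trichotomy A1.length A2.length with hlt | heq | hgt'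
  · exact absurd (key A1 A2 r1 r2 h1 h2 he hlt) (by simp)
  · rw [List.append_assoc, List.append_assoc] at he
    obtain ⟨hA, hr⟩ := List.append_inj he heq
    exact ⟨hA, by simpa using hr⟩
  · exact absurd (key A2 A1 r2 r1 h2 h1 he.symm hgt') (by simp)

lemma first_return {t : List Step} (hw : IsMotzkin (Step.U :: t)) :
    ∃ A B, IsMotzkin A ∧ IsMotzkin B ∧ t = A ++ [Step.D] ++ B := by
  have ht : hgt t = -1 := by
    have := hw.2
    rw [hgt_cons] at this
    simp [Step.val] at this
    omega
  -- every prefix of t has height ≥ -1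
  have hlb : ∀ m : ℕ, -1 ≤ hgt (t.take m) := by
    intro m
    have hp : (Step.U :: t.take m) <+: Step.U :: t :=
      ⟨t.drop m, by simp⟩
    have := hw.1 _ hp
    rw [hgt_cons] at this
    simp [Step.val] at this
    omega
  have hP : ∃ n, hgt (t.take n) = -1 := ⟨t.length, by simpa using ht⟩
  classical
  set n := Nat.find hP with hn_def
  have hn : hgt (t.take n) = -1 := Nat.find_spec hP
  have hmin : ∀ m, m < n → hgt (t.take m) ≠ -1 := fun m hm => Nat.find_min hP hm
  have hpos : ∀ m, m < n → 0 ≤ hgt (t.take m) := by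
    intro m hm
    have := hlb m
    have := hmin m hm
    omega
  have hn0 : n ≠ 0 := by
    intro h
    have := hn
    rw [h] at this
    simp [hgt_nil] at this
  have hnle : n ≤ t.length := Nat.find_min' hP (by simpa using ht)
  clear_value n
  clear hn_def
  obtain ⟨m, rfl⟩ : ∃ m, n = m + 1 := ⟨n - 1, by omega⟩
  have hmlt : m < t.length := by omega
  have hstep : hgt (t.take (m+1)) = hgt (t.take m) + (t[m]).val := hgt_take_succ hmlt
  have hm0 : 0 ≤ hgt (t.take m) := hpos m (by omega)
  have hD : t[m] = Step.D ∧ hgt (t.take m) = 0 := by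
    cases h : t[m] <;> rw [h] at hstep <;> simp [Step.val] at hstep <;>
      first | (exfalso; omega) | (exact ⟨rfl, by omega⟩)
  refine ⟨t.take m, t.drop (m+1), ⟨?_, hD.2⟩, ⟨?_, ?_⟩, ?_⟩
  · -- prefixes of A
    intro p hp
    have hlen : p.length ≤ m := by
      have := hp.length_le
      simpa [hmlt.le] using this
    have hpt : p = t.take p.length := by
      have : p <+: t := hp.trans (t.take_prefix m)
      exact List.prefix_iff_eq_take.mp this
    rw [hpt]
    exact hpos _ (by omega)
  · -- prefixes of B
    intro p hp
    obtain ⟨q, hq⟩ := hp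
    have hp' : (Step.U :: (t.take (m+1) ++ p)) <+: Step.U :: t :=
      ⟨q, by simp [hq, List.append_assoc]⟩
    have := hw.1 _ hp'
    rw [hgt_cons, hgt_append, hn] at this
    simp [Step.val] at this
    omega
  · -- hgt B = 0
    have : hgt (t.take (m+1)) + hgt (t.drop (m+1)) = hgt t := by
      rw [← hgt_append, List.take_append_drop]
    omega
  · -- the split
    conv_lhs => rw [← List.take_append_drop m t]
    rw [List.drop_eq_getElem_cons hmlt, hD.1]
    simp

lemma motzkin_tail_H {A : List Step} (h : IsMotzkin (Step.H :: A)) : IsMotzkin A := by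
  constructor
  · intro p hp
    have := h.1 (Step.H :: p) (List.cons_prefix_cons.mpr ⟨rfl, hp⟩)
    rw [hgt_cons] at this
    simpa [Step.val] using this
  · have := h.2
    rw [hgt_cons] at this
    simpa [Step.val] using this

/-- every nonempty cornerless Motzkin path can be written uniquely in
exactly one of the forms `HA`, `UA'D`, `UA'DHA` with `A` a cornerless Motzkin path
and `A'` a nonempty cornerless Motzkin path. -/
theorem cornerless_motzkin_decomposition :
    ∀ w : List Step, IsMotzkin w → Cornerless w → w ≠ [] →
      ∃! d : List Step ⊕ List Step ⊕ List Step × List Step,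
        match d with
        | Sum.inl A => (IsMotzkin A ∧ Cornerless A) ∧ w = Step.H :: A
        | Sum.inr (Sum.inl A') =>
            (IsMotzkin A' ∧ Cornerless A' ∧ A' ≠ []) ∧
              w = Step.U :: (A' ++ [Step.D])
        | Sum.inr (Sum.inr (A', A)) =>
            (IsMotzkin A' ∧ Cornerless A' ∧ A' ≠ []) ∧
              (IsMotzkin A ∧ Cornerless A) ∧
              w = Step.U :: (A' ++ [Step.D, Step.H] ++ A) := by
  intro w hw hc hne
  rcases w with _ | ⟨s, t⟩
  · exact absurd rfl hne
  cases s
  case H =>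
    refine ⟨Sum.inl t, ⟨⟨motzkin_tail_H hw, cornerless_of_infix hc
      (List.IsSuffix.isInfix ⟨[Step.H], rfl⟩)⟩, rfl⟩, ?_⟩
    rintro (A | A' | ⟨A', A⟩) hy
    · obtain ⟨_, heq⟩ := hy
      injection heq with _ h
      rw [h]
    · exact absurd hy.2 (by simp)
    · exact absurd hy.2.2 (by simp)
  case D =>
    exfalso
    have := hw.1 [Step.D] ⟨t, rfl⟩
    simp [hgt, Step.val] at this
  case U =>
    obtain ⟨A', B, hA', hB, hsplit⟩ := first_return hw
    subst hsplit
    have hA'ne : A' ≠ [] := by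
      rintro rfl
      exact hc.1 ⟨[], B, by simp⟩
    have hcA' : Cornerless A' := cornerless_of_infix hc ⟨[Step.U], [Step.D] ++ B, by simp⟩
    cases B with
    | nil =>
      refine ⟨Sum.inr (Sum.inl A'), ⟨⟨hA', hcA', hA'ne⟩, by simp⟩, ?_⟩
      rintro (A | A2 | ⟨A2, A0⟩) hy
      · exact absurd hy.2 (by simp)
      · obtain ⟨⟨hA2, _, _⟩, heq⟩ := hy
        injection heq with _ h
        have h' : A2 ++ [Step.D] ++ ([] : List Step) = A' ++ [Step.D] ++ [] := by
          simpa using h.symm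
        obtain ⟨h1, _⟩ := split_unique hA2 hA' h'
        rw [h1]
      · obtain ⟨⟨hA2, _, _⟩, _, heq⟩ := hy
        injection heq with _ h
        have h' : A2 ++ [Step.D] ++ (Step.H :: A0) = A' ++ [Step.D] ++ [] := by
          rw [h]; simp
        obtain ⟨_, h2⟩ := split_unique hA2 hA' h'
        simp at h2
    | cons b B' =>
      cases b
      case D =>
        exfalso
        have hp : (Step.U :: (A' ++ [Step.D, Step.D])) <+: Step.U :: (A' ++ [Step.D] ++ Step.D :: B') :=
          ⟨B', by simp⟩
        have := hw.1 _ hp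
        rw [hgt_cons, hgt_append, hA'.2] at this
        simp [hgt, Step.val] at this
      case U =>
        exact absurd ⟨Step.U :: A', B', by simp⟩ hc.2
      case H =>
        have hB' : IsMotzkin B' := motzkin_tail_H hB
        have hcB' : Cornerless B' :=
          cornerless_of_infix hc (List.IsSuffix.isInfix ⟨Step.U :: (A' ++ [Step.D, Step.H]), by simp⟩)
        refine ⟨Sum.inr (Sum.inr (A', B')), ⟨⟨hA', hcA', hA'ne⟩, ⟨hB', hcB'⟩, by simp⟩, ?_⟩
        rintro (A | A2 | ⟨A2, A0⟩) hy
        · exact absurd hy.2 (by simp)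
        · obtain ⟨⟨hA2, _, _⟩, heq⟩ := hy
          injection heq with _ h
          have h' : A2 ++ [Step.D] ++ ([] : List Step) = A' ++ [Step.D] ++ (Step.H :: B') := by
            simpa using h.symm
          obtain ⟨_, h2⟩ := split_unique hA2 hA' h'
          simp at h2
        · obtain ⟨⟨hA2, _, _⟩, _, heq⟩ := hy
          injection heq with _ h
          have h' : A2 ++ [Step.D] ++ (Step.H :: A0) = A' ++ [Step.D] ++ (Step.H :: B') := by
            rw [h]; simp
          obtain ⟨h1, h2⟩ := split_unique hA2 hA' h'
          injection h2 with _ h3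
          rw [h1, h3]
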